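/- Berkovich's classification of the points of the Berkovich affine line. Let K be an algebraically closed field that is complete with respect to a nontrivial non-Archimedean absolute value. For every nonempty nested collection ℰ of closed discs in K, the formula |φ|_{x_ℰ} := inf_{D ∈ ℰ} sup_{b ∈ D} |φ(b)| defines a multiplicative seminorm on the polynomial ring K[z] extending the absolute value of K; conversely, every multiplicative seminorm on K[z] extending the absolute value of K equals x_ℰ for a unique nonempty nested collection ℰ. Moreover, the bijection ℰ ↦ x_ℰ reverses order: x_ℰ ≤ x_{ℰ'} if and only if ℰ' ⊆ ℰ. -/

import Mathlib

/-- A closed disc `D(a,r) = {b : |b − a| ≤ r}` in `K` (degenerate discs `r = 0` allowed). -/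
def IsClosedDisc {K : Type*} [NontriviallyNormedField K] (D : Set K) : Prop :=
  ∃ (a : K) (r : ℝ), 0 ≤ r ∧ D = Metric.closedBall a r

/-- A nested collection of closed discs in `K`: (a) any two members are comparable under
inclusion; (b) every closed disc containing a member is a member; (c) the collection is
closed under intersections of decreasing sequences whose intersection is a closed disc. -/
def IsNestedCollection {K : Type*} [NontriviallyNormedField K] (ℰ : Set (Set K)) : Prop :=
  (∀ D ∈ ℰ, IsClosedDisc D) ∧
  (∀ D ∈ ℰ, ∀ D' ∈ ℰ, D ⊆ D' ∨ D' ⊆ D) ∧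
  (∀ D : Set K, IsClosedDisc D → (∃ D' ∈ ℰ, D' ⊆ D) → D ∈ ℰ) ∧
  (∀ Dseq : ℕ → Set K, (∀ n, Dseq n ∈ ℰ) → (∀ n, Dseq (n + 1) ⊆ Dseq n) →
    IsClosedDisc (⋂ n, Dseq n) → (⋂ n, Dseq n) ∈ ℰ)

/-- A multiplicative seminorm on `K[z]` extending the absolute value of `K`. -/
def IsMultSeminorm {K : Type*} [NontriviallyNormedField K] (N : Polynomial K → ℝ) : Prop :=
  (∀ φ, 0 ≤ N φ) ∧ N 0 = 0 ∧ N 1 = 1 ∧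
  (∀ φ ψ, N (φ * ψ) = N φ * N ψ) ∧
  (∀ φ ψ, N (φ + ψ) ≤ N φ + N ψ) ∧
  (∀ c : K, N (Polynomial.C c) = ‖c‖)

/-- The seminorm `x_ℰ` attached to a nested collection `ℰ` of closed discs:
`|φ|_{x_ℰ} = inf_{D ∈ ℰ} sup_{b ∈ D} |φ(b)|`. -/
noncomputable def discSeminorm {K : Type*} [NontriviallyNormedField K]
    (ℰ : Set (Set K)) (φ : Polynomial K) : ℝ :=
  sInf ((fun D : Set K => sSup ((fun b : K => ‖Polynomial.eval b φ‖) '' D)) '' ℰ)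


open Polynomial Metric IsUltrametricDist


namespace Berk

variable {K : Type*} [NontriviallyNormedField K]

noncomputable def supD (φ : Polynomial K) (D : Set K) : ℝ :=
  sSup ((fun b : K => ‖Polynomial.eval b φ‖) '' D)

lemma norm_multiset_prod (s : Multiset K) : ‖s.prod‖ = (s.map (fun x => ‖x‖)).prod := by
  induction s using Multiset.induction with
  | empty => simp
  | cons a s ih => simp [norm_mul, ih]

lemma eval_norm_eq [IsAlgClosed K] (φ : Polynomial K) (b : K) :
    ‖eval b φ‖ = ‖φ.leadingCoeff‖ * ((φ.roots.map (fun α => ‖b - α‖)).prod) := by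
  by_cases h0 : φ = 0
  · simp [h0]
  · conv_lhs => rw [(IsAlgClosed.splits φ).eq_prod_roots]
    rw [eval_mul, eval_C, norm_mul, eval_multiset_prod, Multiset.map_map, norm_multiset_prod,
      Multiset.map_map]
    congr 2
    ext α
    simp

lemma exists_norm_Ioc [IsAlgClosed K] {s r : ℝ} (h0 : 0 ≤ s) (hsr : s < r) :
    ∃ t : K, s < ‖t‖ ∧ ‖t‖ ≤ r := by
  rcases eq_or_lt_of_le h0 with h0 | h0
  · obtain ⟨x, hx0, hxr⟩ := NormedField.exists_norm_lt K (lt_of_le_of_lt h0.le hsr)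
    exact ⟨x, by rw [← h0]; exact hx0, hxr.le⟩
  · obtain ⟨x, hx⟩ := NormedField.exists_one_lt_norm K
    have hrs : (1:ℝ) < r / s := (one_lt_div h0).2 hsr
    obtain ⟨n, hn⟩ := pow_unbounded_of_one_lt ‖x‖ hrs
    obtain ⟨y, hy⟩ := IsAlgClosed.exists_pow_nat_eq x (n := n + 1) (Nat.succ_pos n)
    have hyn : ‖y‖ ^ (n + 1) = ‖x‖ := by rw [← norm_pow, hy]
    have hy1 : 1 < ‖y‖ := by
      by_contra h
      push_neg at h
      have : ‖x‖ ≤ 1 := by rw [← hyn]; exact pow_le_one₀ (norm_nonneg y) h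
      linarith
    have hylt : ‖y‖ < r / s := by
      have : ‖y‖ ^ (n+1) < (r/s) ^ (n+1) :=
        lt_of_lt_of_le (hyn ▸ hn) (pow_le_pow_right₀ hrs.le (Nat.le_succ n))
      exact lt_of_pow_lt_pow_left₀ _ (by positivity) this
    obtain ⟨k, hk⟩ := exists_mem_Ico_zpow h0 hy1
    refine ⟨y ^ (k+1), ?_, ?_⟩
    · rw [norm_zpow]; exact hk.2
    · rw [norm_zpow, zpow_add_one₀ (by positivity : ‖y‖ ≠ 0)]
      have : ‖y‖ ^ k * ‖y‖ < r := by
        calc ‖y‖ ^ k * ‖y‖ ≤ s * ‖y‖ :=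
              mul_le_mul_of_nonneg_right hk.1 (norm_nonneg y)
          _ < s * (r / s) := mul_lt_mul_of_pos_left hylt h0
          _ = r := by field_simp
      exact this.le

lemma exists_sep [IsAlgClosed K] [IsUltrametricDist K] (S : Finset K)
    (hS : ∀ s ∈ S, ‖s‖ ≤ 1) : ∃ x : K, ‖x‖ ≤ 1 ∧ ∀ s ∈ S, ‖x - s‖ = 1 := by
  classical
  rcases S.eq_empty_or_nonempty with rfl | hSne
  · exact ⟨0, by simp, by simp⟩
  set g : Polynomial K := (∏ s ∈ S, (X - C s)) - 1 with hg
  have hmon : (∏ s ∈ S, (X - C s)).Monic := monic_prod_of_monic _ _ (fun s _ => monic_X_sub_C s)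
  have hdeg : 0 < (∏ s ∈ S, (X - C s)).natDegree := by
    rw [natDegree_prod _ _ (fun s _ => X_sub_C_ne_zero s)]
    simp only [natDegree_X_sub_C, Finset.sum_const, smul_eq_mul, mul_one]
    exact hSne.card_pos
  have hgdeg : g.degree ≠ 0 := by
    have h1 : (1 : Polynomial K).degree < (∏ s ∈ S, (X - C s)).degree := by
      rw [degree_one, degree_eq_natDegree hmon.ne_zero]
      exact_mod_cast hdeg
    rw [hg, degree_sub_eq_left_of_degree_lt h1, degree_eq_natDegree hmon.ne_zero]
    simp only [ne_eq, Nat.cast_eq_zero]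
    omega
  obtain ⟨x, hx⟩ := IsAlgClosed.exists_root g hgdeg
  have hprod : ∏ s ∈ S, (x - s) = 1 := by
    have h := hx
    rw [IsRoot, hg, eval_sub, eval_one, sub_eq_zero, eval_prod] at h
    simpa using h
  have hprodn : ∏ s ∈ S, ‖x - s‖ = 1 := by
    rw [← norm_prod]
    rw [hprod, norm_one]
  -- first : ‖x‖ ≤ 1
  have hxle : ‖x‖ ≤ 1 := by
    by_contra hgt
    push_neg at hgt
    have heq : ∀ s ∈ S, ‖x - s‖ = ‖x‖ := by
      intro s hs
      have hne : ‖x‖ ≠ ‖-s‖ := by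
        rw [norm_neg]; exact ne_of_gt (lt_of_le_of_lt (hS s hs) hgt)
      have := norm_add_eq_max_of_norm_ne_norm (x := x) (y := -s) hne
      rw [← sub_eq_add_neg] at this
      rw [this, norm_neg]
      exact max_eq_left (le_trans (hS s hs) hgt.le)
    rw [Finset.prod_congr rfl heq, Finset.prod_const] at hprodn
    have : (1:ℝ) < ‖x‖ ^ S.card := one_lt_pow₀ hgt hSne.card_pos.ne'
    rw [hprodn] at this
    exact lt_irrefl _ this
  refine ⟨x, hxle, fun s hs => ?_⟩
  have hle : ∀ u ∈ S, ‖x - u‖ ≤ 1 := fun u hu => by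
    calc ‖x - u‖ ≤ max ‖x‖ ‖u‖ := by
          simpa [sub_eq_add_neg, norm_neg] using norm_add_le_max x (-u)
      _ ≤ 1 := max_le hxle (hS u hu)
  have h1 : ∏ u ∈ S.erase s, ‖x - u‖ ≤ 1 :=
    Finset.prod_le_one (fun u _ => norm_nonneg _) (fun u hu => hle u (Finset.mem_of_mem_erase hu))
  have h2 : ‖x - s‖ * ∏ u ∈ S.erase s, ‖x - u‖ = 1 := by
    rw [← Finset.mul_prod_erase S _ hs] at hprodn
    exact hprodn
  have h3 : (1:ℝ) ≤ ‖x - s‖ := by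
    nlinarith [norm_nonneg (x - s), Finset.prod_nonneg (fun u (_ : u ∈ S.erase s) => norm_nonneg (x - u))]
  exact le_antisymm (hle s hs) h3

end Berk

namespace Berk
variable {K : Type*} [NontriviallyNormedField K]

lemma mprod_nonneg {ι : Type*} (s : Multiset ι) (f : ι → ℝ) (h0 : ∀ i ∈ s, 0 ≤ f i) :
    0 ≤ (s.map f).prod := by
  induction s using Multiset.induction with
  | empty => simp
  | cons a s ih =>
    simp only [Multiset.map_cons, Multiset.prod_cons]
    exact mul_nonneg (h0 a (Multiset.mem_cons_self a s))
      (ih (fun i hi => h0 i (Multiset.mem_cons_of_mem hi)))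

lemma mprod_le {ι : Type*} (s : Multiset ι) (f g : ι → ℝ) (h0 : ∀ i ∈ s, 0 ≤ f i)
    (h : ∀ i ∈ s, f i ≤ g i) : (s.map f).prod ≤ (s.map g).prod := by
  induction s using Multiset.induction with
  | empty => simp
  | cons a s ih =>
    simp only [Multiset.map_cons, Multiset.prod_cons]
    exact mul_le_mul (h a (Multiset.mem_cons_self a s))
      (ih (fun i hi => h0 i (Multiset.mem_cons_of_mem hi))
          (fun i hi => h i (Multiset.mem_cons_of_mem hi)))
      (mprod_nonneg _ _ (fun i hi => h0 i (Multiset.mem_cons_of_mem hi)))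
      (le_trans (h0 a (Multiset.mem_cons_self a s)) (h a (Multiset.mem_cons_self a s)))

/-- The Gauss bound -/
noncomputable def gaussB (φ : Polynomial K) (a : K) (r : ℝ) : ℝ :=
  ‖φ.leadingCoeff‖ * ((φ.roots.map (fun α => max r ‖α - a‖)).prod)

lemma gaussB_nonneg (φ : Polynomial K) (a : K) {r : ℝ} (hr : 0 ≤ r) : 0 ≤ gaussB φ a r :=
  mul_nonneg (norm_nonneg _) (mprod_nonneg _ _ (fun α _ => le_trans hr (le_max_left _ _)))

section Ultra
variable [IsUltrametricDist K] [IsAlgClosed K]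

lemma eval_le_gaussB (φ : Polynomial K) (a : K) {r : ℝ} {b : K}
    (hb : b ∈ closedBall a r) : ‖eval b φ‖ ≤ gaussB φ a r := by
  rw [eval_norm_eq, gaussB]
  refine mul_le_mul_of_nonneg_left ?_ (norm_nonneg _)
  refine mprod_le _ _ _ (fun α _ => norm_nonneg _) (fun α _ => ?_)
  have hba : ‖b - a‖ ≤ r := by rwa [mem_closedBall, dist_eq_norm] at hb
  calc ‖b - α‖ = ‖(b - a) + (a - α)‖ := by ring_nf
    _ ≤ max ‖b - a‖ ‖a - α‖ := norm_add_le_max _ _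
    _ ≤ max r ‖α - a‖ := by
        rw [norm_sub_rev a α]
        exact max_le_max hba le_rfl

lemma supD_bddAbove (φ : Polynomial K) (a : K) (r : ℝ) :
    BddAbove ((fun b : K => ‖Polynomial.eval b φ‖) '' closedBall a r) := by
  refine ⟨gaussB φ a r, ?_⟩
  rintro v ⟨b, hb, rfl⟩
  exact eval_le_gaussB φ a hb

lemma supD_nonneg_ball (φ : Polynomial K) (a : K) {r : ℝ} (hr : 0 ≤ r) :
    0 ≤ supD φ (closedBall a r) :=
  le_trans (norm_nonneg (eval a φ))
    (le_csSup (supD_bddAbove φ a r) ⟨a, mem_closedBall_self hr, rfl⟩)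

lemma supD_le_gaussB (φ : Polynomial K) (a : K) {r : ℝ} (hr : 0 ≤ r) :
    supD φ (closedBall a r) ≤ gaussB φ a r := by
  refine csSup_le ⟨‖eval a φ‖, a, mem_closedBall_self hr, rfl⟩ ?_
  rintro v ⟨b, hb, rfl⟩
  exact eval_le_gaussB φ a hb

end Ultra
end Berk

namespace Berk
variable {K : Type*} [NontriviallyNormedField K] [IsUltrametricDist K] [IsAlgClosed K]

/-- For each `t` with `‖t‖ ≤ r` there is a point `b` of the ball where all linear factors are
as large as the `ρ = ‖t‖` Gauss bound predicts. -/
lemma exists_point (φ : Polynomial K) (a : K) {r : ℝ} (t : K) (ht : ‖t‖ ≤ r) :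
    ∃ b ∈ closedBall a r,
      ‖φ.leadingCoeff‖ * ((φ.roots.map (fun α => max ‖t‖ ‖α - a‖)).prod) ≤ ‖eval b φ‖ := by
  classical
  by_cases ht0 : t = 0
  · refine ⟨a, mem_closedBall_self (le_trans (norm_nonneg t) ht), ?_⟩
    rw [eval_norm_eq]
    refine mul_le_mul_of_nonneg_left ?_ (norm_nonneg _)
    refine mprod_le _ _ _ (fun α _ => le_trans (norm_nonneg _) (le_max_right _ _)) (fun α _ => ?_)
    subst ht0
    simp only [norm_zero]
    rw [max_eq_right (norm_nonneg _), norm_sub_rev]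
  · set S : Finset K := (φ.roots.toFinset.filter (fun α => ‖α - a‖ ≤ ‖t‖)).image
      (fun α => (α - a) / t) with hSdEf
    have hnt : 0 < ‖t‖ := norm_pos_iff.2 ht0
    have hSle : ∀ s ∈ S, ‖s‖ ≤ 1 := by
      intro s hs
      simp only [hSdEf, Finset.mem_image, Finset.mem_filter] at hs
      obtain ⟨α, ⟨_, hα⟩, rfl⟩ := hs
      rw [norm_div]
      exact div_le_one_of_le₀ hα (norm_nonneg t)
    obtain ⟨x, hx1, hxs⟩ := exists_sep S hSle
    refine ⟨a + t * x, ?_, ?_⟩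
    · rw [mem_closedBall, dist_eq_norm]
      simp only [add_sub_cancel_left, norm_mul]
      calc ‖t‖ * ‖x‖ ≤ ‖t‖ * 1 := mul_le_mul_of_nonneg_left hx1 (norm_nonneg t)
        _ ≤ r := by rwa [mul_one]
    · rw [eval_norm_eq]
      refine mul_le_mul_of_nonneg_left ?_ (norm_nonneg _)
      refine mprod_le _ _ _ (fun α _ => le_trans (norm_nonneg _) (le_max_right _ _))
        (fun α hα => ?_)
      by_cases hcase : ‖α - a‖ ≤ ‖t‖
      · have hmem : (α - a) / t ∈ S := by
          simp only [hSdEf, Finset.mem_image, Finset.mem_filter]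
          exact ⟨α, ⟨Multiset.mem_toFinset.2 hα, hcase⟩, rfl⟩
        have : a + t * x - α = t * (x - (α - a) / t) := by
          field_simp
          ring
        rw [max_eq_left hcase, this, norm_mul, hxs _ hmem, mul_one]
      · push_neg at hcase
        have h1 : ‖t * x‖ < ‖α - a‖ := by
          calc ‖t * x‖ = ‖t‖ * ‖x‖ := norm_mul t x
            _ ≤ ‖t‖ := by nlinarith [norm_nonneg t]
            _ < ‖α - a‖ := hcase
        have h2 : a + t * x - α = t * x + -(α - a) := by ring
        have h3 : ‖a + t * x - α‖ = ‖α - a‖ := by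
          rw [h2, norm_add_eq_max_of_norm_ne_norm (by rw [norm_neg]; exact ne_of_lt h1),
            norm_neg, max_eq_right h1.le]
        rw [h3, max_eq_right hcase.le]

lemma max_scale {ρ r d : ℝ} (h0 : 0 ≤ ρ) (hρr : ρ ≤ r) (hr : 0 < r) (hd : 0 ≤ d) :
    (ρ / r) * max r d ≤ max ρ d := by
  rcases le_or_gt r d with h | h
  · rw [max_eq_right h, max_eq_right (le_trans hρr h)]
    calc (ρ / r) * d ≤ 1 * d := by
          apply mul_le_mul_of_nonneg_right _ hd
          exact div_le_one_of_le₀ hρr hr.le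
      _ = d := one_mul d
  · rw [max_eq_left h.le]
    calc (ρ / r) * r = ρ := by field_simp
      _ ≤ max ρ d := le_max_left _ _

lemma gaussB_le_supD (φ : Polynomial K) (a : K) {r : ℝ} (hr : 0 ≤ r) :
    gaussB φ a r ≤ supD φ (closedBall a r) := by
  rcases eq_or_lt_of_le hr with rfl | hrpos
  · -- r = 0
    obtain ⟨b, hb, hle⟩ := exists_point φ a (0 : K) (by simp : ‖(0:K)‖ ≤ (0:ℝ))
    calc gaussB φ a 0 = ‖φ.leadingCoeff‖ * ((φ.roots.map (fun α => max ‖(0:K)‖ ‖α - a‖)).prod) := by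
          simp [gaussB]
      _ ≤ ‖eval b φ‖ := hle
      _ ≤ supD φ (closedBall a 0) := le_csSup (supD_bddAbove φ a 0) ⟨b, hb, rfl⟩
  · -- r > 0
    set G := gaussB φ a r with hG
    set Sup := supD φ (closedBall a r) with hSup
    by_contra hcon
    push_neg at hcon
    -- Sup < G ; choose s := (Sup + G)/2
    have hSup0 : 0 ≤ Sup := supD_nonneg_ball φ a hr
    have hG0 : 0 < G := lt_of_le_of_lt hSup0 hcon
    set s : ℝ := (Sup + G) / 2 with hs
    have hsG : s < G := by rw [hs]; linarith
    have hs0 : 0 ≤ s := by positivity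
    have hsSup : Sup < s := by rw [hs]; linarith
    set m : ℕ := φ.roots.card with hm
    -- choose θ ∈ (0,1) with θ^m ≥ s/G
    obtain ⟨θ, hθ0, hθ1, hθm⟩ : ∃ θ : ℝ, 0 < θ ∧ θ < 1 ∧ s / G ≤ θ ^ m := by
      by_cases hm0 : m = 0
      · exact ⟨1/2, by norm_num, by norm_num, by
          rw [hm0, pow_zero]; exact (div_le_one hG0).2 hsG.le⟩
      · set u : ℝ := max (s / G) (1/2) with hu
        have hu0 : 0 < u := lt_of_lt_of_le (by norm_num) (le_max_right _ _)
        have hu1 : u < 1 := by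
          apply max_lt _ (by norm_num)
          exact (div_lt_one hG0).2 hsG
        refine ⟨u ^ ((m : ℝ)⁻¹), ?_, ?_, ?_⟩
        · exact Real.rpow_pos_of_pos hu0 _
        · exact Real.rpow_lt_one hu0.le hu1 (by positivity)
        · rw [← Real.rpow_natCast (u ^ ((m:ℝ)⁻¹)) m, ← Real.rpow_mul hu0.le,
            inv_mul_cancel₀ (by exact_mod_cast hm0), Real.rpow_one]
          exact le_max_left _ _
    -- density
    obtain ⟨t, htθ, htr⟩ := exists_norm_Ioc (K := K) (s := θ * r) (by positivity)
      ((mul_lt_iff_lt_one_left hrpos).2 hθ1)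
    obtain ⟨b, hb, hle⟩ := exists_point φ a t htr
    have hρ0 : 0 < ‖t‖ := lt_of_le_of_lt (by positivity) htθ
    -- scale inequality
    have hscale : (‖t‖ / r) ^ m * G ≤
        ‖φ.leadingCoeff‖ * ((φ.roots.map (fun α => max ‖t‖ ‖α - a‖)).prod) := by
      rw [hG, gaussB, ← mul_assoc, mul_comm ((‖t‖/r)^m) ‖φ.leadingCoeff‖, mul_assoc]
      refine mul_le_mul_of_nonneg_left ?_ (norm_nonneg _)
      have : (‖t‖ / r) ^ m * (φ.roots.map (fun α => max r ‖α - a‖)).prod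
          = (φ.roots.map (fun α => (‖t‖ / r) * max r ‖α - a‖)).prod := by
        rw [hm]
        induction φ.roots using Multiset.induction with
        | empty => simp
        | cons β sβ ih =>
          simp only [Multiset.map_cons, Multiset.prod_cons, Multiset.card_cons, pow_succ]
          rw [← ih]
          ring
      rw [this]
      refine mprod_le _ _ _ (fun α _ => by positivity) (fun α _ => ?_)
      exact max_scale hρ0.le htr hrpos (norm_nonneg _)
    have hθρ : θ ^ m ≤ (‖t‖ / r) ^ m := by
      apply pow_le_pow_left₀ hθ0.le
      rw [le_div_iff₀ hrpos]
      have := htθ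
      rw [mul_comm] at this ⊢
      exact this.le
    have : s ≤ Sup := by
      calc s = (s / G) * G := by field_simp
        _ ≤ θ ^ m * G := mul_le_mul_of_nonneg_right hθm hG0.le
        _ ≤ (‖t‖ / r) ^ m * G := mul_le_mul_of_nonneg_right hθρ hG0.le
        _ ≤ ‖φ.leadingCoeff‖ * ((φ.roots.map (fun α => max ‖t‖ ‖α - a‖)).prod) := hscale
        _ ≤ ‖eval b φ‖ := hle
        _ ≤ Sup := le_csSup (supD_bddAbove φ a r) ⟨b, hb, rfl⟩
    linarith

lemma supD_closedBall (φ : Polynomial K) (a : K) {r : ℝ} (hr : 0 ≤ r) :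
    supD φ (closedBall a r) = gaussB φ a r :=
  le_antisymm (supD_le_gaussB φ a hr) (gaussB_le_supD φ a hr)

end Berk

namespace Berk
open Metric
variable {K : Type*} [NontriviallyNormedField K]

lemma IsClosedDisc.nonempty {D : Set K}
    (hD : ∃ (a : K) (r : ℝ), 0 ≤ r ∧ D = Metric.closedBall a r) : D.Nonempty := by
  obtain ⟨a, r, hr, rfl⟩ := hD
  exact ⟨a, mem_closedBall_self hr⟩

section Ultra
variable [IsUltrametricDist K] [IsAlgClosed K]

lemma supD_bddAbove' (φ : Polynomial K) {D : Set K}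
    (hD : ∃ (a : K) (r : ℝ), 0 ≤ r ∧ D = Metric.closedBall a r) :
    BddAbove ((fun b : K => ‖Polynomial.eval b φ‖) '' D) := by
  obtain ⟨a, r, hr, rfl⟩ := hD
  exact supD_bddAbove φ a r

lemma supD_mono (φ : Polynomial K) {D D' : Set K}
    (hD : ∃ (a : K) (r : ℝ), 0 ≤ r ∧ D = Metric.closedBall a r)
    (hD' : ∃ (a : K) (r : ℝ), 0 ≤ r ∧ D' = Metric.closedBall a r)
    (hsub : D ⊆ D') : supD φ D ≤ supD φ D' :=
  csSup_le_csSup (supD_bddAbove' φ hD')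
    ((IsClosedDisc.nonempty hD).image _) (Set.image_mono hsub)

lemma supD_nonneg (φ : Polynomial K) {D : Set K}
    (hD : ∃ (a : K) (r : ℝ), 0 ≤ r ∧ D = Metric.closedBall a r) : 0 ≤ supD φ D := by
  obtain ⟨a, r, hr, rfl⟩ := hD
  exact supD_nonneg_ball φ a hr

lemma supD_const (c : K) {D : Set K} (hD : D.Nonempty) : supD (C c) D = ‖c‖ := by
  have h : (fun b : K => ‖Polynomial.eval b (C c)‖) '' D = {‖c‖} := by
    have : (fun b : K => ‖Polynomial.eval b (C c)‖) = fun _ => ‖c‖ := by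
      funext b; simp
    rw [this, Set.Nonempty.image_const hD]
  rw [supD, h, csSup_singleton]

lemma supD_mul (φ ψ : Polynomial K) {D : Set K}
    (hD : ∃ (a : K) (r : ℝ), 0 ≤ r ∧ D = Metric.closedBall a r) :
    supD (φ * ψ) D = supD φ D * supD ψ D := by
  obtain ⟨a, r, hr, rfl⟩ := hD
  by_cases hφ : φ = 0
  · subst hφ
    rw [zero_mul]
    have h0 : supD (0 : Polynomial K) (closedBall a r) = 0 := by
      have := supD_const (0 : K) (⟨a, mem_closedBall_self hr⟩ : (closedBall a r).Nonempty)
      simpa using this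
    rw [h0, zero_mul]
  by_cases hψ : ψ = 0
  · subst hψ
    rw [mul_zero]
    have h0 : supD (0 : Polynomial K) (closedBall a r) = 0 := by
      have := supD_const (0 : K) (⟨a, mem_closedBall_self hr⟩ : (closedBall a r).Nonempty)
      simpa using this
    rw [h0, mul_zero]
  rw [supD_closedBall _ a hr, supD_closedBall _ a hr, supD_closedBall _ a hr]
  rw [gaussB, gaussB, gaussB, leadingCoeff_mul, norm_mul,
    Polynomial.roots_mul (mul_ne_zero hφ hψ), Multiset.map_add, Multiset.prod_add]
  ring

lemma supD_add (φ ψ : Polynomial K) {D : Set K}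
    (hD : ∃ (a : K) (r : ℝ), 0 ≤ r ∧ D = Metric.closedBall a r) :
    supD (φ + ψ) D ≤ supD φ D + supD ψ D := by
  refine csSup_le ((IsClosedDisc.nonempty hD).image _) ?_
  rintro v ⟨b, hb, rfl⟩
  calc ‖eval b (φ + ψ)‖ ≤ ‖eval b φ‖ + ‖eval b ψ‖ := by
        rw [eval_add]; exact norm_add_le _ _
    _ ≤ supD φ D + supD ψ D := by
        apply add_le_add
        · exact le_csSup (supD_bddAbove' φ hD) ⟨b, hb, rfl⟩
        · exact le_csSup (supD_bddAbove' ψ hD) ⟨b, hb, rfl⟩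

lemma supD_linear (a a' : K) {r : ℝ} (hr : 0 ≤ r) :
    supD (X - C a') (closedBall a r) = max r ‖a' - a‖ := by
  rw [supD_closedBall _ a hr, gaussB]
  have h1 : (X - C a').leadingCoeff = 1 := (monic_X_sub_C a').leadingCoeff
  have h2 : (X - C a').roots = {a'} := roots_X_sub_C a'
  rw [h1, h2]
  simp

end Ultra
end Berk

namespace Berk
variable {K : Type*} [NontriviallyNormedField K]

section DS
variable [IsUltrametricDist K] [IsAlgClosed K]
variable {ℰ : Set (Set K)}

lemma ds_bddBelow (hN : IsNestedCollection ℰ) (φ : Polynomial K) :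
    BddBelow ((fun D => supD φ D) '' ℰ) := by
  refine ⟨0, ?_⟩
  rintro v ⟨D, hD, rfl⟩
  exact supD_nonneg φ (hN.1 D hD)

lemma ds_eq (ℰ : Set (Set K)) (φ : Polynomial K) :
    discSeminorm ℰ φ = sInf ((fun D => supD φ D) '' ℰ) := rfl

lemma ds_le (hN : IsNestedCollection ℰ) (φ : Polynomial K) {D : Set K} (hD : D ∈ ℰ) :
    discSeminorm ℰ φ ≤ supD φ D :=
  csInf_le (ds_bddBelow hN φ) ⟨D, hD, rfl⟩

lemma ds_nonneg (hN : IsNestedCollection ℰ) (hne : ℰ.Nonempty) (φ : Polynomial K) :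
    0 ≤ discSeminorm ℰ φ := by
  refine le_csInf (hne.image _) ?_
  rintro v ⟨D, hD, rfl⟩
  exact supD_nonneg φ (hN.1 D hD)

lemma ds_const (hN : IsNestedCollection ℰ) (hne : ℰ.Nonempty) (c : K) :
    discSeminorm ℰ (C c) = ‖c‖ := by
  refine le_antisymm ?_ ?_
  · obtain ⟨D, hD⟩ := hne
    calc discSeminorm ℰ (C c) ≤ supD (C c) D := ds_le hN _ hD
      _ = ‖c‖ := supD_const c (IsClosedDisc.nonempty (hN.1 D hD))
  · refine le_csInf (hne.image _) ?_
    rintro v ⟨D, hD, rfl⟩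
    exact le_of_eq (supD_const c (IsClosedDisc.nonempty (hN.1 D hD))).symm

lemma ds_zero (hN : IsNestedCollection ℰ) (hne : ℰ.Nonempty) :
    discSeminorm ℰ (0 : Polynomial K) = 0 := by
  have := ds_const hN hne (0 : K)
  simpa using this

lemma ds_one (hN : IsNestedCollection ℰ) (hne : ℰ.Nonempty) :
    discSeminorm ℰ (1 : Polynomial K) = 1 := by
  have := ds_const hN hne (1 : K)
  simpa using this

/-- In a chain, we can find a common disc nearly realizing two infima. -/
lemma ds_exists_common (hN : IsNestedCollection ℰ) (hne : ℰ.Nonempty)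
    (φ ψ : Polynomial K) {ε : ℝ} (hε : 0 < ε) :
    ∃ D ∈ ℰ, supD φ D < discSeminorm ℰ φ + ε ∧ supD ψ D < discSeminorm ℰ ψ + ε := by
  have h1 : sInf ((fun D => supD φ D) '' ℰ) < discSeminorm ℰ φ + ε := by
    rw [← ds_eq]; linarith
  have h2 : sInf ((fun D => supD ψ D) '' ℰ) < discSeminorm ℰ ψ + ε := by
    rw [← ds_eq]; linarith
  obtain ⟨v1, ⟨D1, hD1, rfl⟩, hv1⟩ := exists_lt_of_csInf_lt (hne.image _) h1
  obtain ⟨v2, ⟨D2, hD2, rfl⟩, hv2⟩ := exists_lt_of_csInf_lt (hne.image _) h2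
  rcases hN.2.1 D1 hD1 D2 hD2 with hsub | hsub
  · refine ⟨D1, hD1, hv1, ?_⟩
    calc supD ψ D1 ≤ supD ψ D2 := supD_mono ψ (hN.1 D1 hD1) (hN.1 D2 hD2) hsub
      _ < _ := hv2
  · refine ⟨D2, hD2, ?_, hv2⟩
    calc supD φ D2 ≤ supD φ D1 := supD_mono φ (hN.1 D2 hD2) (hN.1 D1 hD1) hsub
      _ < _ := hv1

lemma ds_mul (hN : IsNestedCollection ℰ) (hne : ℰ.Nonempty) (φ ψ : Polynomial K) :
    discSeminorm ℰ (φ * ψ) = discSeminorm ℰ φ * discSeminorm ℰ ψ := by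
  set Iφ := discSeminorm ℰ φ with hIφ
  set Iψ := discSeminorm ℰ ψ with hIψ
  have hIφ0 : 0 ≤ Iφ := ds_nonneg hN hne φ
  have hIψ0 : 0 ≤ Iψ := ds_nonneg hN hne ψ
  refine le_antisymm ?_ ?_
  · -- ≤ : for every δ > 0
    refine le_of_forall_pos_le_add (fun δ hδ => ?_)
    set ε : ℝ := min 1 (δ / (Iφ + Iψ + 1)) with hε
    have hε0 : 0 < ε := lt_min one_pos (by positivity)
    obtain ⟨D, hD, h1, h2⟩ := ds_exists_common hN hne φ ψ hε0
    have key : discSeminorm ℰ (φ * ψ) ≤ (Iφ + ε) * (Iψ + ε) := by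
      calc discSeminorm ℰ (φ * ψ) ≤ supD (φ * ψ) D := ds_le hN _ hD
        _ = supD φ D * supD ψ D := supD_mul φ ψ (hN.1 D hD)
        _ ≤ (Iφ + ε) * (Iψ + ε) := by
            apply mul_le_mul h1.le h2.le (supD_nonneg ψ (hN.1 D hD)) (by linarith)
    have hε1 : ε ≤ 1 := min_le_left _ _
    have hε2 : ε ≤ δ / (Iφ + Iψ + 1) := min_le_right _ _
    have hε3 : ε * (Iφ + Iψ + 1) ≤ δ := by
      rw [div_eq_mul_inv] at hε2
      have h : 0 < Iφ + Iψ + 1 := by linarith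
      calc ε * (Iφ + Iψ + 1) ≤ (δ * (Iφ + Iψ + 1)⁻¹) * (Iφ + Iψ + 1) :=
            mul_le_mul_of_nonneg_right hε2 h.le
        _ = δ := by field_simp
    nlinarith
  · -- ≥
    refine le_csInf (hne.image _) ?_
    rintro v ⟨D, hD, rfl⟩
    show Iφ * Iψ ≤ supD (φ * ψ) D
    rw [supD_mul φ ψ (hN.1 D hD)]
    exact mul_le_mul (ds_le hN φ hD) (ds_le hN ψ hD) hIψ0 (supD_nonneg φ (hN.1 D hD))

lemma ds_add (hN : IsNestedCollection ℰ) (hne : ℰ.Nonempty) (φ ψ : Polynomial K) :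
    discSeminorm ℰ (φ + ψ) ≤ discSeminorm ℰ φ + discSeminorm ℰ ψ := by
  refine le_of_forall_pos_le_add (fun δ hδ => ?_)
  obtain ⟨D, hD, h1, h2⟩ := ds_exists_common hN hne φ ψ (half_pos hδ)
  calc discSeminorm ℰ (φ + ψ) ≤ supD (φ + ψ) D := ds_le hN _ hD
    _ ≤ supD φ D + supD ψ D := supD_add φ ψ (hN.1 D hD)
    _ ≤ discSeminorm ℰ φ + discSeminorm ℰ ψ + δ := by linarith

lemma ds_isMultSeminorm (hN : IsNestedCollection ℰ) (hne : ℰ.Nonempty) :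
    IsMultSeminorm (discSeminorm ℰ) :=
  ⟨ds_nonneg hN hne, ds_zero hN hne, ds_one hN hne, ds_mul hN hne, ds_add hN hne,
    ds_const hN hne⟩

end DS
end Berk

namespace Berk
open Metric
variable {K : Type*} [NontriviallyNormedField K] [IsUltrametricDist K] [IsAlgClosed K]
variable {ℰ ℰ' : Set (Set K)}

lemma ds_linear_mem (hN : IsNestedCollection ℰ) {a : K} {r : ℝ} (hr : 0 ≤ r)
    (hD : closedBall a r ∈ ℰ) : discSeminorm ℰ (X - C a) ≤ r := by
  calc discSeminorm ℰ (X - C a) ≤ supD (X - C a) (closedBall a r) := ds_le hN _ hD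
    _ = max r ‖a - a‖ := supD_linear a a hr
    _ = r := by simp [hr]

lemma mem_of_ds_le (hN : IsNestedCollection ℰ) (hne : ℰ.Nonempty) {a : K} {r : ℝ}
    (hr : 0 ≤ r) (h : discSeminorm ℰ (X - C a) ≤ r) : closedBall a r ∈ ℰ := by
  by_cases hA : ∃ D ∈ ℰ, supD (X - C a) D ≤ r
  · obtain ⟨D, hD, hsup⟩ := hA
    refine hN.2.2.1 (closedBall a r) ⟨a, r, hr, rfl⟩ ⟨D, hD, ?_⟩
    intro b hb
    rw [mem_closedBall, dist_eq_norm]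
    calc ‖b - a‖ = ‖eval b (X - C a)‖ := by simp
      _ ≤ supD (X - C a) D := le_csSup (supD_bddAbove' _ (hN.1 D hD)) ⟨b, hb, rfl⟩
      _ ≤ r := hsup
  · push_neg at hA
    have hsel : ∀ n : ℕ, ∃ D ∈ ℰ, supD (X - C a) D < r + 1/(n+1) := by
      intro n
      have : sInf ((fun D => supD (X - C a) D) '' ℰ) < r + 1/(n+1) := by
        rw [← ds_eq]
        have : (0:ℝ) < 1/(n+1) := by positivity
        linarith
      obtain ⟨v, ⟨D, hD, rfl⟩, hv⟩ := exists_lt_of_csInf_lt (hne.image _) this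
      exact ⟨D, hD, hv⟩
    choose Dn hDn hDlt using hsel
    set t : ℕ → ℝ := fun n => supD (X - C a) (Dn n) with ht
    have htr : ∀ n, r < t n := fun n => hA (Dn n) (hDn n)
    have hsubE : ∀ n, Dn n ⊆ closedBall a (t n) := by
      intro n b hb
      rw [mem_closedBall, dist_eq_norm]
      calc ‖b - a‖ = ‖eval b (X - C a)‖ := by simp
        _ ≤ t n := le_csSup (supD_bddAbove' _ (hN.1 _ (hDn n))) ⟨b, hb, rfl⟩
    have hE : ∀ n, closedBall a (t n) ∈ ℰ := fun n =>
      hN.2.2.1 _ ⟨a, t n, le_trans hr (htr n).le, rfl⟩ ⟨Dn n, hDn n, hsubE n⟩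
    set u : ℕ → ℝ := fun n => (Finset.range (n+1)).inf' (by simp) t with hu
    have huval : ∀ n, ∃ k, u n = t k := by
      intro n
      obtain ⟨k, _, hk⟩ := Finset.exists_mem_eq_inf' (α := ℝ)
        (s := Finset.range (n+1)) (by simp) t
      exact ⟨k, hk⟩
    have huanti : ∀ n, u (n+1) ≤ u n := by
      intro n
      exact Finset.inf'_mono t (Finset.range_subset_range.2 (by omega)) (by simp)
    have huler : ∀ n, r < u n := by
      intro n
      obtain ⟨k, hk⟩ := huval n
      rw [hk]; exact htr k
    have hulet : ∀ n, u n ≤ t n := fun n =>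
      Finset.inf'_le t (by simp : n ∈ Finset.range (n+1))
    set F : ℕ → Set K := fun n => closedBall a (u n) with hF
    have hFmem : ∀ n, F n ∈ ℰ := by
      intro n
      obtain ⟨k, hk⟩ := huval n
      simpa [hF, hk] using hE k
    have hFdec : ∀ n, F (n+1) ⊆ F n := fun n =>
      closedBall_subset_closedBall (huanti n)
    have hFint : (⋂ n, F n) = closedBall a r := by
      ext b
      simp only [Set.mem_iInter, hF, mem_closedBall, dist_eq_norm]
      constructor
      · intro hb
        refine le_of_forall_pos_le_add (fun ε hε => ?_)
        obtain ⟨n, hn⟩ := exists_nat_one_div_lt hε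
        calc ‖b - a‖ ≤ u n := hb n
          _ ≤ t n := hulet n
          _ ≤ r + 1/(n+1) := (hDlt n).le
          _ ≤ r + ε := by
              have : (1:ℝ)/(n+1) ≤ ε := by exact_mod_cast hn.le
              linarith
      · intro hb n
        exact le_trans hb (huler n).le
    have := hN.2.2.2 F hFmem hFdec (by rw [hFint]; exact ⟨a, r, hr, rfl⟩)
    rwa [hFint] at this

end Berk

namespace Berk
open Metric
variable {K : Type*} [NontriviallyNormedField K] [IsUltrametricDist K] [IsAlgClosed K]
variable {ℰ ℰ' : Set (Set K)}

lemma ds_anti (hN : IsNestedCollection ℰ) (hsub : ℰ' ⊆ ℰ) (hne' : ℰ'.Nonempty)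
    (φ : Polynomial K) : discSeminorm ℰ φ ≤ discSeminorm ℰ' φ :=
  csInf_le_csInf (ds_bddBelow hN φ) (hne'.image _) (Set.image_mono hsub)

lemma subset_of_ds_le (hN : IsNestedCollection ℰ) (hne : ℰ.Nonempty)
    (hN' : IsNestedCollection ℰ')
    (hle : ∀ φ : Polynomial K, discSeminorm ℰ φ ≤ discSeminorm ℰ' φ) : ℰ' ⊆ ℰ := by
  intro D hD
  obtain ⟨a, r, hr, rfl⟩ := hN'.1 D hD
  apply mem_of_ds_le hN hne hr
  calc discSeminorm ℰ (X - C a) ≤ discSeminorm ℰ' (X - C a) := hle _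
    _ ≤ r := ds_linear_mem hN' hr hD

lemma ds_injective (hN : IsNestedCollection ℰ) (hne : ℰ.Nonempty)
    (hN' : IsNestedCollection ℰ') (hne' : ℰ'.Nonempty)
    (h : discSeminorm ℰ = discSeminorm ℰ') : ℰ = ℰ' := by
  apply Set.Subset.antisymm
  · exact subset_of_ds_le hN' hne' hN (fun φ => le_of_eq (congrFun h.symm φ))
  · exact subset_of_ds_le hN hne hN' (fun φ => le_of_eq (congrFun h φ))

end Berk

namespace Berk
open Metric
variable {K : Type*} [NontriviallyNormedField K] [IsUltrametricDist K] [IsAlgClosed K]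
variable {N : Polynomial K → ℝ}

lemma exists_linear_lt_pow {q : ℝ} (hq : 1 < q) : ∃ n : ℕ, (n:ℝ) + 1 < q ^ n := by
  have h := isLittleO_coe_const_pow_of_one_lt (R := ℝ) hq
  have h2 := h.bound (by norm_num : (0:ℝ) < 1/2)
  have h3 := (h2.and (Filter.eventually_ge_atTop 4)).exists
  obtain ⟨n, hn1, hn2⟩ := h3
  have hq0 : (0:ℝ) < q ^ n := pow_pos (by linarith) n
  rw [Real.norm_natCast, Real.norm_eq_abs, abs_of_pos hq0] at hn1
  refine ⟨n, ?_⟩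
  have : (4:ℝ) ≤ (n:ℝ) := by exact_mod_cast hn2
  linarith

lemma N_pow (hS : IsMultSeminorm N) (φ : Polynomial K) (n : ℕ) : N (φ ^ n) = N φ ^ n := by
  induction n with
  | zero => simpa using hS.2.2.1
  | succ n ih => rw [pow_succ, pow_succ, hS.2.2.2.1, ih]

lemma N_sum (hS : IsMultSeminorm N) {ι : Type*} (s : Finset ι) (f : ι → Polynomial K) :
    N (∑ i ∈ s, f i) ≤ ∑ i ∈ s, N (f i) := by
  classical
  induction s using Finset.induction with
  | empty => simp [hS.2.1]
  | insert _ _ hni ih =>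
    rename_i a s
    rw [Finset.sum_insert hni, Finset.sum_insert hni]
    exact le_trans (hS.2.2.2.2.1 _ _) (by linarith)

lemma N_nonarch (hS : IsMultSeminorm N) (φ ψ : Polynomial K) :
    N (φ + ψ) ≤ max (N φ) (N ψ) := by
  set M : ℝ := max (N φ) (N ψ) with hM
  have hM0 : 0 ≤ M := le_trans (hS.1 φ) (le_max_left _ _)
  have hφM : N φ ≤ M := le_max_left _ _
  have hψM : N ψ ≤ M := le_max_right _ _
  have key : ∀ n : ℕ, N (φ + ψ) ^ n ≤ ((n:ℝ) + 1) * M ^ n := by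
    intro n
    rw [← N_pow hS]
    rw [add_pow]
    calc N (∑ k ∈ Finset.range (n+1), φ ^ k * ψ ^ (n - k) * (n.choose k : Polynomial K))
        ≤ ∑ k ∈ Finset.range (n+1), N (φ ^ k * ψ ^ (n - k) * (n.choose k : Polynomial K)) :=
          N_sum hS _ _
      _ ≤ ∑ k ∈ Finset.range (n+1), M ^ n := by
          apply Finset.sum_le_sum
          intro k hk
          rw [Finset.mem_range] at hk
          have hc : N ((n.choose k : Polynomial K)) ≤ 1 := by
            have : ((n.choose k : ℕ) : Polynomial K) = C ((n.choose k : ℕ) : K) := by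
              simp
            rw [this, hS.2.2.2.2.2]
            exact norm_natCast_le_one K _
          calc N (φ ^ k * ψ ^ (n - k) * (n.choose k : Polynomial K))
              = N φ ^ k * N ψ ^ (n-k) * N ((n.choose k : Polynomial K)) := by
                rw [hS.2.2.2.1, hS.2.2.2.1, N_pow hS, N_pow hS]
            _ ≤ N φ ^ k * N ψ ^ (n-k) * 1 := by
                apply mul_le_mul_of_nonneg_left hc
                exact mul_nonneg (pow_nonneg (hS.1 φ) _) (pow_nonneg (hS.1 ψ) _)
            _ = N φ ^ k * N ψ ^ (n-k) := mul_one _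
            _ ≤ M ^ k * M ^ (n-k) := by
                apply mul_le_mul (pow_le_pow_left₀ (hS.1 φ) hφM k)
                  (pow_le_pow_left₀ (hS.1 ψ) hψM _) (pow_nonneg (hS.1 ψ) _) (pow_nonneg hM0 _)
            _ = M ^ n := by
                rw [← pow_add]
                congr 1
                omega
      _ = ((n:ℝ) + 1) * M ^ n := by
          rw [Finset.sum_const, Finset.card_range]
          push_cast
          ring
  set t := N (φ + ψ) with htd
  have ht0 : 0 ≤ t := hS.1 _
  rcases eq_or_lt_of_le hM0 with hMz | hMpos
  · -- M = 0
    have := key 1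
    rw [pow_one, pow_one, ← hMz] at this
    have : t ≤ 0 := by linarith
    rw [← hMz]
    linarith
  · by_contra hcon
    push_neg at hcon
    have hq : 1 < t / M := (one_lt_div hMpos).2 hcon
    obtain ⟨n, hn⟩ := exists_linear_lt_pow hq
    have h1 : (t/M)^n ≤ (n:ℝ) + 1 := by
      rw [div_pow, div_le_iff₀ (pow_pos hMpos n)]
      exact key n
    linarith

end Berk

namespace Berk
open Metric
variable {K : Type*} [NontriviallyNormedField K] [IsUltrametricDist K] [IsAlgClosed K]
variable {N : Polynomial K → ℝ}

/-- The canonical nested collection attached to a multiplicative seminorm. -/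
def canonColl (N : Polynomial K → ℝ) : Set (Set K) :=
  {D | ∃ (a : K) (r : ℝ), 0 ≤ r ∧ D = closedBall a r ∧ N (X - C a) ≤ r}

lemma N_neg (hS : IsMultSeminorm N) (φ : Polynomial K) : N (-φ) = N φ := by
  have : -φ = C (-1 : K) * φ := by simp
  rw [this, hS.2.2.2.1, hS.2.2.2.2.2]
  simp

lemma N_sub_nonarch (hS : IsMultSeminorm N) (φ ψ : Polynomial K) :
    N (φ - ψ) ≤ max (N φ) (N ψ) := by
  rw [sub_eq_add_neg]
  calc N (φ + -ψ) ≤ max (N φ) (N (-ψ)) := N_nonarch hS φ (-ψ)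
    _ = max (N φ) (N ψ) := by rw [N_neg hS]

lemma N_linear_dist (hS : IsMultSeminorm N) (a a' : K) :
    N (X - C a') ≤ max (N (X - C a)) ‖a - a'‖ := by
  have h : (X - C a') = (X - C a) + C (a - a') := by
    rw [map_sub]
    ring
  calc N (X - C a') = N ((X - C a) + C (a - a')) := by rw [← h]
    _ ≤ max (N (X - C a)) (N (C (a - a'))) := N_nonarch hS _ _
    _ = max (N (X - C a)) ‖a - a'‖ := by rw [hS.2.2.2.2.2]

lemma ultra_ball_subset {a a' : K} {r r' : ℝ} (h : ‖a - a'‖ ≤ r') (hrr : r ≤ r') :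
    closedBall a r ⊆ closedBall a' r' := by
  intro b hb
  rw [mem_closedBall, dist_eq_norm] at hb ⊢
  calc ‖b - a'‖ = ‖(b - a) + (a - a')‖ := by ring_nf
    _ ≤ max ‖b - a‖ ‖a - a'‖ := norm_add_le_max _ _
    _ ≤ r' := max_le (le_trans hb hrr) h

lemma canon_nested (hS : IsMultSeminorm N) : IsNestedCollection (canonColl N) := by
  refine ⟨?_, ?_, ?_, ?_⟩
  · rintro D ⟨a, r, hr, rfl, _⟩
    exact ⟨a, r, hr, rfl⟩
  · rintro D ⟨a, r, hr, rfl, hNa⟩ D' ⟨a', r', hr', rfl, hNa'⟩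
    have hdist : ‖a - a'‖ ≤ max r r' := by
      have h : Polynomial.C (a - a') = (X - C a') - (X - C a) := by
        rw [map_sub]; ring
      calc ‖a - a'‖ = N (C (a - a')) := (hS.2.2.2.2.2 _).symm
        _ = N ((X - C a') - (X - C a)) := by rw [h]
        _ ≤ max (N (X - C a')) (N (X - C a)) := N_sub_nonarch hS _ _
        _ ≤ max r' r := max_le_max hNa' hNa
        _ = max r r' := max_comm _ _
    rcases le_total r r' with hrr | hrr
    · left
      exact ultra_ball_subset (le_trans hdist (by rw [max_eq_right hrr])) hrr
    · right
      apply ultra_ball_subset _ hrr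
      rw [norm_sub_rev]
      exact le_trans hdist (by rw [max_eq_left hrr])
  · rintro D ⟨a'', r'', hr'', rfl⟩ ⟨D', ⟨a, r, hr, rfl, hNa⟩, hsub⟩
    have hsup : max r ‖a'' - a‖ ≤ r'' := by
      have h1 : supD (X - C a'') (closedBall a r) ≤ supD (X - C a'') (closedBall a'' r'') :=
        supD_mono _ ⟨a, r, hr, rfl⟩ ⟨a'', r'', hr'', rfl⟩ hsub
      rwa [supD_linear a a'' hr, supD_linear a'' a'' hr'', sub_self, norm_zero,
        max_eq_left hr''] at h1
    refine ⟨a'', r'', hr'', rfl, ?_⟩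
    calc N (X - C a'') ≤ max (N (X - C a)) ‖a - a''‖ := N_linear_dist hS a a''
      _ ≤ r'' := by
        apply max_le (le_trans hNa (le_trans (le_max_left _ _) hsup))
        rw [norm_sub_rev]
        exact le_trans (le_max_right r _) hsup
  · rintro Dseq hmem hdec ⟨a, r, hr, hint⟩
    rw [hint]
    have hamem : ∀ n, a ∈ Dseq n := by
      intro n
      have : a ∈ ⋂ n, Dseq n := by
        rw [hint]; exact mem_closedBall_self hr
      exact Set.mem_iInter.1 this n
    have hNlt : ∀ n, ∃ rn : ℝ, N (X - C a) ≤ rn ∧ closedBall a rn ⊆ Dseq n := by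
      intro n
      obtain ⟨an, rn, hrn, heq, hNn⟩ := hmem n
      have han : ‖a - an‖ ≤ rn := by
        have := hamem n
        rw [heq, mem_closedBall, dist_eq_norm] at this
        exact this
      refine ⟨rn, ?_, ?_⟩
      · calc N (X - C a) ≤ max (N (X - C an)) ‖an - a‖ := N_linear_dist hS an a
          _ ≤ rn := by
            apply max_le hNn
            rw [norm_sub_rev]
            exact han
      · rw [heq]
        exact ultra_ball_subset han le_rfl
    refine ⟨a, r, hr, rfl, ?_⟩
    by_contra hcon
    push_neg at hcon
    obtain ⟨t, htr, hts⟩ := exists_norm_Ioc (K := K) hr hcon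
    have hbmem : ∀ n, a + t ∈ Dseq n := by
      intro n
      obtain ⟨rn, hNrn, hsubn⟩ := hNlt n
      apply hsubn
      rw [mem_closedBall, dist_eq_norm, add_sub_cancel_left]
      exact le_trans hts hNrn
    have : a + t ∈ ⋂ n, Dseq n := Set.mem_iInter.2 hbmem
    rw [hint, mem_closedBall, dist_eq_norm, add_sub_cancel_left] at this
    linarith

lemma canon_nonempty (hS : IsMultSeminorm N) : (canonColl N).Nonempty := by
  refine ⟨closedBall 0 (N X), 0, N X, hS.1 X, rfl, ?_⟩
  simp

end Berk

namespace Berk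
open Metric
variable {K : Type*} [NontriviallyNormedField K] [IsUltrametricDist K] [IsAlgClosed K]
variable {N : Polynomial K → ℝ}

lemma ds_canon_linear (hS : IsMultSeminorm N) (α : K) :
    discSeminorm (canonColl N) (X - C α) = N (X - C α) := by
  have hN0 : 0 ≤ N (X - C α) := hS.1 _
  refine le_antisymm ?_ ?_
  · have hmem : closedBall α (N (X - C α)) ∈ canonColl N :=
      ⟨α, N (X - C α), hN0, rfl, le_rfl⟩
    calc discSeminorm (canonColl N) (X - C α)
        ≤ supD (X - C α) (closedBall α (N (X - C α))) := ds_le (canon_nested hS) _ hmem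
      _ = max (N (X - C α)) ‖α - α‖ := supD_linear α α hN0
      _ = N (X - C α) := by simp [hN0]
  · refine le_csInf ((canon_nonempty hS).image _) ?_
    rintro v ⟨D, ⟨a, r, hr, rfl, hNa⟩, rfl⟩
    show N (X - C α) ≤ supD (X - C α) (closedBall a r)
    rw [supD_linear a α hr]
    calc N (X - C α) ≤ max (N (X - C a)) ‖a - α‖ := N_linear_dist hS a α
      _ ≤ max r ‖α - a‖ := by
          rw [norm_sub_rev]
          exact max_le_max hNa le_rfl

/-- Any multiplicative function extending the norm factors over the roots. -/
lemma mult_factor (F : Polynomial K → ℝ) (hmul : ∀ φ ψ, F (φ * ψ) = F φ * F ψ)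
    (hC : ∀ c : K, F (C c) = ‖c‖) {φ : Polynomial K} (hφ : φ ≠ 0) :
    F φ = ‖φ.leadingCoeff‖ * ((φ.roots.map (fun α => F (X - C α))).prod) := by
  have hmprod : ∀ s : Multiset K,
      F ((s.map (fun α => X - C α)).prod) = (s.map (fun α => F (X - C α))).prod := by
    intro s
    induction s using Multiset.induction with
    | empty =>
      simp only [Multiset.map_zero, Multiset.prod_zero]
      have := hC 1
      simpa using this
    | cons β sβ ih =>
      simp only [Multiset.map_cons, Multiset.prod_cons]
      rw [hmul, ih]
  conv_lhs => rw [(IsAlgClosed.splits φ).eq_prod_roots]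
  rw [hmul, hC, hmprod]

lemma N_eq_ds_canon (hS : IsMultSeminorm N) : N = discSeminorm (canonColl N) := by
  have hcanonN := canon_nested hS
  have hcanonNe := canon_nonempty hS
  funext φ
  by_cases hφ : φ = 0
  · rw [hφ, hS.2.1, ds_zero hcanonN hcanonNe]
  · rw [mult_factor N hS.2.2.2.1 hS.2.2.2.2.2 hφ,
      mult_factor (discSeminorm (canonColl N)) (ds_mul hcanonN hcanonNe)
        (ds_const hcanonN hcanonNe) hφ]
    congr 1
    apply congrArg
    apply Multiset.map_congr rfl
    intro α _
    rw [ds_canon_linear hS α]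

end Berk


/-- **Berkovich's classification of the points of the Berkovich affine line.** Over a
complete, algebraically closed, nontrivially valued non-Archimedean field `K`: the
formula `|φ|_{x_ℰ} = inf_{D ∈ ℰ} sup_{b ∈ D} |φ(b)|` defines a multiplicative seminorm
on `K[z]` extending the absolute value of `K` for every nonempty nested collection `ℰ`
of closed discs; conversely every such seminorm equals `x_ℰ` for a unique nonempty
nested collection `ℰ`; and the bijection `ℰ ↦ x_ℰ` reverses order. -/
theorem berkovich_classification {K : Type*} [NontriviallyNormedField K] [IsAlgClosed K]
    [CompleteSpace K] (hna : ∀ a b : K, ‖a + b‖ ≤ max ‖a‖ ‖b‖) :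
    (∀ ℰ : Set (Set K), IsNestedCollection ℰ → ℰ.Nonempty →
      IsMultSeminorm (discSeminorm ℰ)) ∧
    (∀ N : Polynomial K → ℝ, IsMultSeminorm N →
      ∃! ℰ : Set (Set K), (IsNestedCollection ℰ ∧ ℰ.Nonempty) ∧ N = discSeminorm ℰ) ∧
    (∀ ℰ ℰ' : Set (Set K), IsNestedCollection ℰ → ℰ.Nonempty →
      IsNestedCollection ℰ' → ℰ'.Nonempty →
      ((∀ φ : Polynomial K, discSeminorm ℰ φ ≤ discSeminorm ℰ' φ) ↔ ℰ' ⊆ ℰ)) := by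
  
  haveI : IsUltrametricDist K :=
    IsUltrametricDist.isUltrametricDist_of_forall_norm_add_le_max_norm hna
  refine ⟨?_, ?_, ?_⟩
  · intro ℰ hN hne
    exact Berk.ds_isMultSeminorm hN hne
  · intro N hS
    refine ⟨Berk.canonColl N, ⟨⟨Berk.canon_nested hS, Berk.canon_nonempty hS⟩,
      Berk.N_eq_ds_canon hS⟩, ?_⟩
    rintro ℰ ⟨⟨hNe, hnee⟩, hEq⟩
    exact Berk.ds_injective hNe hnee (Berk.canon_nested hS) (Berk.canon_nonempty hS)
      (hEq.symm.trans (Berk.N_eq_ds_canon hS))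
  · intro ℰ ℰ' hN hne hN' hne'
    constructor
    · exact fun hle => Berk.subset_of_ds_le hN hne hN' hle
    · exact fun hsub φ => Berk.ds_anti hN hsub hne' φ
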